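/- (Identical successors property) Let P ⊆ 𝒫 be finite, k ≥ 2, and δ ∈ D^P_k(K45_nD) (i.e., δ is satisfiable in some Kripke model all of whose relations are transitive and Euclidean). Then for every l with 1 ≤ l < k, every nonempty B ⊆ 𝒜, and every η ∈ R_B(δ): {χ^{↓l} : χ ∈ R_B(δ)} = {χ^{↓(l−1)} : χ ∈ R_B(η)}. -/

import Mathlib

/-!
Common framework: multi-agent epistemic modal logic with distributed knowledge.
Agents are `Fin n`, atoms are natural numbers.
-/

namespace DKLogic

/-- Formulas of the language `L_D`: atoms, negation, conjunction, disjunction and the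
distributed-knowledge modality `D_B` for nonempty sets `B` of agents (together with the
constants `⊤`/`⊥`, which the paper uses as the empty conjunction/disjunction). -/
inductive Formula (n : ℕ) : Type
  | top : Formula n
  | bot : Formula n
  | atom : ℕ → Formula n
  | neg : Formula n → Formula n
  | and : Formula n → Formula n → Formula n
  | or : Formula n → Formula n → Formula n
  | D : {B : Finset (Fin n) // B.Nonempty} → Formula n → Formula n

namespace Formula

/-- Modal depth of a formula. -/
def depth {n : ℕ} : Formula n → ℕ
  | top => 0
  | bot => 0
  | atom _ => 0
  | neg φ => depth φ
  | and φ ψ => max (depth φ) (depth ψ)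
  | or φ ψ => max (depth φ) (depth ψ)
  | D _ φ => depth φ + 1

/-- The atoms occurring in a formula. -/
def atoms {n : ℕ} : Formula n → Finset ℕ
  | top => ∅
  | bot => ∅
  | atom q => {q}
  | neg φ => atoms φ
  | and φ ψ => atoms φ ∪ atoms ψ
  | or φ ψ => atoms φ ∪ atoms ψ
  | D _ φ => atoms φ

end Formula

/-- A Kripke model over world type `W` with `n` agents. -/
structure KModel (n : ℕ) (W : Type) where
  R : Fin n → W → W → Prop
  V : W → Set ℕ

/-- The distributed accessibility relation `R_B = ⋂_{i ∈ B} R_i`. -/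
def KModel.RB {n : ℕ} {W : Type} (M : KModel n W) (B : Finset (Fin n)) (s t : W) : Prop :=
  ∀ i ∈ B, M.R i s t

/-- Satisfaction. -/
def Sat {n : ℕ} {W : Type} (M : KModel n W) : W → Formula n → Prop
  | _, .top => True
  | _, .bot => False
  | s, .atom q => q ∈ M.V s
  | s, .neg φ => ¬ Sat M s φ
  | s, .and φ ψ => Sat M s φ ∧ Sat M s ψ
  | s, .or φ ψ => Sat M s φ ∨ Sat M s ψ
  | s, .D B φ => ∀ t : W, M.RB B.1 s t → Sat M t φ

/-- Seriality of a relation. -/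
def Serial {W : Type} (R : W → W → Prop) : Prop := ∀ x, ∃ y, R x y

/-- Euclideanness of a relation. -/
def Euclidean {W : Type} (R : W → W → Prop) : Prop := ∀ x y z, R x y → R x z → R y z

/-- The six modal systems. -/
inductive MSys : Type
  | K | D | T | K45 | KD45 | S5

/-- `L`-models: frame conditions on each accessibility relation for each system. -/
def IsModel {n : ℕ} {W : Type} : MSys → KModel n W → Prop
  | .K, _ => True
  | .D, M => ∀ i, Serial (M.R i)
  | .T, M => ∀ i, Reflexive (M.R i)
  | .K45, M => ∀ i, Transitive (M.R i) ∧ Euclidean (M.R i)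
  | .KD45, M => ∀ i, Serial (M.R i) ∧ Transitive (M.R i) ∧ Euclidean (M.R i)
  | .S5, M => ∀ i, Reflexive (M.R i) ∧ Transitive (M.R i) ∧ Euclidean (M.R i)

/-- Semantic consequence over `L`-models. -/
def Entails {n : ℕ} (L : MSys) (φ ψ : Formula n) : Prop :=
  ∀ (W : Type) (M : KModel n W), IsModel L M → ∀ s : W, Sat M s φ → Sat M s ψ

/-- Semantic equivalence over `L`-models. -/
def EquivL {n : ℕ} (L : MSys) (φ ψ : Formula n) : Prop :=
  Entails L φ ψ ∧ Entails L ψ φ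

/-- `L`-satisfiability. -/
def SatL {n : ℕ} (L : MSys) (φ : Formula n) : Prop :=
  ∃ (W : Type) (M : KModel n W) (s : W), IsModel L M ∧ Sat M s φ

/-- Collective `p`-bisimulation between two pointed models. -/
def CollPBisim {n : ℕ} {W W' : Type} (M : KModel n W) (s : W) (M' : KModel n W') (s' : W')
    (p : ℕ) : Prop :=
  ∃ ρ : W → W' → Prop, ρ s s' ∧
    ∀ u u', ρ u u' →
      ((∀ q : ℕ, q ≠ p → (q ∈ M.V u ↔ q ∈ M'.V u')) ∧
       (∀ B : Finset (Fin n), B.Nonempty → ∀ v, M.RB B u v → ∃ v', M'.RB B u' v' ∧ ρ v v') ∧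
       (∀ B : Finset (Fin n), B.Nonempty → ∀ v', M'.RB B u' v' → ∃ v, M.RB B u v ∧ ρ v v'))

/-- `ψ` is a result of forgetting `p` in `φ` in system `L`
(written `dforget_L(φ,p) ≡_L ψ` in the paper). -/
def IsForget {n : ℕ} (L : MSys) (φ : Formula n) (p : ℕ) (ψ : Formula n) : Prop :=
  ψ.atoms ⊆ φ.atoms.erase p ∧
  (∀ (W W' : Type) (M : KModel n W) (M' : KModel n W') (s : W) (s' : W'),
      IsModel L M → IsModel L M' → Sat M s φ → CollPBisim M s M' s' p → Sat M' s' ψ) ∧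
  (∀ (W' : Type) (M' : KModel n W') (s' : W'),
      IsModel L M' → Sat M' s' ψ →
      ∃ (W : Type) (M : KModel n W) (s : W), IsModel L M ∧ Sat M s φ ∧ CollPBisim M s M' s' p)

/-- `L` is closed under forgetting: `dforget_L(φ,p)` exists (as an `L`-satisfiable formula)
for every `L`-satisfiable `φ` and every atom `p`. -/
def ClosedUnderForgetting {n : ℕ} (L : MSys) : Prop :=
  ∀ (φ : Formula n) (p : ℕ), SatL L φ → ∃ ψ : Formula n, SatL L ψ ∧ IsForget L φ p ψ

/-- `ψ` is a uniform interpolant of `φ` in `L` over `P \ {p}`. -/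
def IsUI {n : ℕ} (L : MSys) (P : Finset ℕ) (p : ℕ) (φ ψ : Formula n) : Prop :=
  SatL L ψ ∧ ψ.atoms ⊆ P.erase p ∧
  ∀ χ : Formula n, p ∉ χ.atoms → (Entails L φ χ ↔ Entails L ψ χ)

/-- The uniform interpolation property for the system `L`. -/
def HasUIP {n : ℕ} (L : MSys) : Prop :=
  ∀ (P : Finset ℕ) (p : ℕ) (φ : Formula n),
    p ∈ P → φ.atoms ⊆ P → SatL L φ → ∃ ψ : Formula n, IsUI L P p φ ψ

/-! ### Canonical formulas -/

/-- Big conjunction of a list of formulas (`⊤` for the empty list). -/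
def bigAnd {n : ℕ} : List (Formula n) → Formula n
  | [] => .top
  | φ :: l => .and φ (bigAnd l)

/-- Big disjunction of a list of formulas (`⊥` for the empty list). -/
def bigOr {n : ℕ} : List (Formula n) → Formula n
  | [] => .bot
  | φ :: l => .or φ (bigOr l)

/-- An injective numerical code of formulas, used to fix a canonical ordering. -/
def fcode {n : ℕ} : Formula n → ℕ
  | .top => Nat.pair 0 0
  | .bot => Nat.pair 1 0
  | .atom q => Nat.pair 2 q
  | .neg φ => Nat.pair 3 (fcode φ)
  | .and φ ψ => Nat.pair 4 (Nat.pair (fcode φ) (fcode ψ))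
  | .or φ ψ => Nat.pair 5 (Nat.pair (fcode φ) (fcode ψ))
  | .D B φ => Nat.pair 6 (Nat.pair (B.1.sum fun i => 2 ^ (i : ℕ)) (fcode φ))

/-- Insert a formula into a strictly `fcode`-sorted list (dropping duplicates). -/
def insertF {n : ℕ} (φ : Formula n) : List (Formula n) → List (Formula n)
  | [] => [φ]
  | ψ :: l =>
      if fcode φ < fcode ψ then φ :: ψ :: l
      else if fcode φ = fcode ψ then ψ :: l
      else ψ :: insertF φ l

/-- The canonical (sorted, duplicate-free) list representing the set of formulas in `l`. -/
def normList {n : ℕ} (l : List (Formula n)) : List (Formula n) := l.foldr insertF []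

/-- The minterm of `P` that is positive exactly on `S`. -/
def minterm {n : ℕ} (P S : Finset ℕ) : Formula n :=
  bigAnd ((P.sort (· ≤ ·)).map fun q =>
    if q ∈ S then Formula.atom q else Formula.neg (Formula.atom q))

/-- The subset of `Fin n` whose characteristic bits are those of `m`. -/
def natToFinset (n m : ℕ) : Finset (Fin n) :=
  Finset.univ.filter fun i => m.testBit (i : ℕ)

/-- A canonical enumeration of all nonempty subsets of the agent set. -/
def neSubsets (n : ℕ) : List {B : Finset (Fin n) // B.Nonempty} :=
  ((List.range (2 ^ n)).map (natToFinset n)).filterMap fun B =>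
    if h : B.Nonempty then some ⟨B, h⟩ else none

/-- `∇_B Φ = D_B (⋁Φ) ∧ ⋀_{φ ∈ Φ} ¬ D_B ¬ φ`. -/
def nabla {n : ℕ} (B : {B : Finset (Fin n) // B.Nonempty}) (Φ : List (Formula n)) : Formula n :=
  Formula.and (Formula.D B (bigOr Φ))
    (bigAnd (Φ.map fun φ => Formula.neg (Formula.D B (Formula.neg φ))))

/-- Underlying data of a d-canonical formula: a set of (positive) atoms together with,
for every set `B` of agents, a list of successor data. -/
inductive CData (n : ℕ) : Type
  | mk (S : Finset ℕ) (succ : Finset (Fin n) → List (CData n)) : CData n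

/-- The positive-atom component. -/
def CData.S {n : ℕ} : CData n → Finset ℕ
  | mk S _ => S

/-- The `B`-successor data. -/
def CData.succ {n : ℕ} : CData n → Finset (Fin n) → List (CData n)
  | mk _ f => f

/-- The d-canonical formula of depth `k` over `P` determined by the data `d`:
`δ_0 ∧ ⋀_{B} ∇_B Φ_B`. -/
def toFormula {n : ℕ} (P : Finset ℕ) : ℕ → CData n → Formula n
  | 0, d => minterm P (d.S ∩ P)
  | (k+1), d =>
      Formula.and (minterm P (d.S ∩ P))
        (bigAnd ((neSubsets n).map fun B =>
          nabla B (normList ((d.succ B.1).map fun c => toFormula P k c))))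

/-- `D^P_k`: the set of d-canonical formulas of depth `k` over `P`. -/
def DP {n : ℕ} (P : Finset ℕ) (k : ℕ) : Set (Formula n) := Set.range (toFormula P k)

/-- `R_B(δ)` for `δ` the level-`k` canonical formula with data `d`:
the set of `B`-successor canonical formulas (of level `k - 1`). -/
def RBset {n : ℕ} (P : Finset ℕ) (k : ℕ) (d : CData n) (B : Finset (Fin n)) :
    Set (Formula n) :=
  {φ | ∃ c ∈ d.succ B, φ = toFormula P (k - 1) c}

/-- One pruning step `δ ↦ δ^↓` on data (first argument: the level of the input). -/
def downD {n : ℕ} : ℕ → CData n → CData n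
  | 0, d => d
  | 1, d => CData.mk d.S (fun _ => [])
  | (k+2), d => CData.mk d.S (fun B => (d.succ B).map fun c => downD (k+1) c)

/-- `l`-fold pruning `δ ↦ δ^{↓l}` on data (first argument: the level of the input). -/
def downIter {n : ℕ} : ℕ → ℕ → CData n → CData n
  | _, 0, d => d
  | k, (l+1), d => downIter (k-1) l (downD k d)

/-- Truncation `δ ↦ δ^{↑l}` on data (first argument: the level of the input). -/
def upD {n : ℕ} : ℕ → ℕ → CData n → CData n
  | _, 0, d => CData.mk d.S (fun _ => [])
  | 0, (_+1), d => d
  | (k+1), (l+1), d => CData.mk d.S (fun B => (d.succ B).map fun c => upD k l c)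

/-- The canonical formula `δ` of level `k` with data `d`. -/
def cf {n : ℕ} (P : Finset ℕ) (k : ℕ) (d : CData n) : Formula n := toFormula P k d

/-- `δ^{↓l}` (a canonical formula of level `k - l`). -/
def cfDown {n : ℕ} (P : Finset ℕ) (k l : ℕ) (d : CData n) : Formula n :=
  toFormula P (k - l) (downIter k l d)

/-- `δ^{↑l}` (a canonical formula of level `min k l`). -/
def cfUp {n : ℕ} (P : Finset ℕ) (k l : ℕ) (d : CData n) : Formula n :=
  toFormula P (min k l) (upD k l d)

/-- Literal elimination: `φ^p` replaces every occurrence of `¬p` by `⊤` and subsequently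
every remaining occurrence of `p` by `⊤`. -/
def elim {n : ℕ} (p : ℕ) : Formula n → Formula n
  | .top => .top
  | .bot => .bot
  | .atom q => if q = p then .top else .atom q
  | .neg (.atom q) => if q = p then .top else .neg (.atom q)
  | .neg φ => .neg (elim p φ)
  | .and φ ψ => .and (elim p φ) (elim p ψ)
  | .or φ ψ => .or (elim p φ) (elim p ψ)
  | .D B φ => .D B (elim p φ)



/-! ### Auxiliary lemmas -/

section Aux

variable {n : ℕ}

theorem testBit_iff_mem_bitIndices (m : ℕ) : ∀ j, m.testBit j ↔ j ∈ m.bitIndices := by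
  induction m using Nat.strong_induction_on with
  | _ m ih =>
    rcases Nat.eq_zero_or_pos m with rfl | hm
    · simp
    have h2 : m / 2 < m := Nat.div_lt_self hm (by norm_num)
    have hmod : m % 2 = 0 ∨ m % 2 = 1 := Nat.mod_two_eq_zero_or_one m
    have hdm : m = 2 * (m / 2) + m % 2 := by omega
    intro j
    rcases hmod with h | h
    · rw [hdm, h]
      cases j with
      | zero => simp [Nat.testBit_zero, Nat.bitIndices_two_mul]
      | succ j =>
        rw [Nat.add_zero, Nat.bitIndices_two_mul, Nat.testBit_succ]
        simp only [Nat.mul_div_cancel_left _ (by norm_num : 0 < 2)]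
        rw [ih _ h2 j]
        simp [List.mem_map]
    · rw [hdm, h]
      cases j with
      | zero => simp [Nat.testBit_zero, Nat.bitIndices_two_mul_add_one]
      | succ j =>
        rw [Nat.bitIndices_two_mul_add_one, Nat.testBit_succ]
        have : (2 * (m / 2) + 1) / 2 = m / 2 := by omega
        rw [this, ih _ h2 j]
        simp [List.mem_map]

theorem finSum_eq_image (B : Finset (Fin n)) :
    (B.sum fun i => 2 ^ (i : ℕ)) = ∑ j ∈ B.image (Fin.val), 2 ^ j := by
  rw [Finset.sum_image]
  intro x _ y _ hxy
  exact Fin.val_injective hxy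

theorem fsum_inj : Function.Injective (fun B : Finset (Fin n) => B.sum fun i => 2 ^ (i : ℕ)) := by
  intro B B' h
  simp only [finSum_eq_image] at h
  have h2 : B.image (Fin.val) = B'.image (Fin.val) := by
    have := congrArg (fun m => (Nat.bitIndices m).toFinset) h
    simpa using this
  exact Finset.image_injective Fin.val_injective h2

theorem fcode_inj : ∀ φ ψ : Formula n, fcode φ = fcode ψ → φ = ψ := by
  intro φ
  induction φ with
  | top =>
    intro ψ h
    cases ψ <;> simp only [fcode, Nat.pair_eq_pair] at h
    all_goals first | rfl | omega
  | bot =>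
    intro ψ h
    cases ψ <;> simp only [fcode, Nat.pair_eq_pair] at h
    all_goals first | rfl | omega
  | atom q =>
    intro ψ h
    cases ψ <;> simp only [fcode, Nat.pair_eq_pair] at h
    case atom q' => rw [h.2]
    all_goals omega
  | neg φ ih =>
    intro ψ h
    cases ψ <;> simp only [fcode, Nat.pair_eq_pair] at h
    case neg ψ' => rw [ih _ h.2]
    all_goals omega
  | and φ1 φ2 ih1 ih2 =>
    intro ψ h
    cases ψ <;> simp only [fcode, Nat.pair_eq_pair] at h
    case and ψ1 ψ2 => rw [ih1 _ h.2.1, ih2 _ h.2.2]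
    all_goals omega
  | or φ1 φ2 ih1 ih2 =>
    intro ψ h
    cases ψ <;> simp only [fcode, Nat.pair_eq_pair] at h
    case or ψ1 ψ2 => rw [ih1 _ h.2.1, ih2 _ h.2.2]
    all_goals omega
  | D B φ ih =>
    intro ψ h
    cases ψ <;> simp only [fcode, Nat.pair_eq_pair] at h
    case D B' ψ' =>
      have hB : B = B' := Subtype.ext (fsum_inj h.2.1)
      rw [hB, ih _ h.2.2]
    all_goals omega

/-- Strict order on formulas by code. -/
def flt (φ ψ : Formula n) : Prop := fcode φ < fcode ψ

theorem insertF_mem {φ ψ : Formula n} : ∀ {L : List (Formula n)},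
    ψ ∈ insertF φ L ↔ ψ = φ ∨ ψ ∈ L
  | [] => by simp [insertF]
  | χ :: L => by
    rw [insertF]
    split_ifs with h1 h2
    · simp [List.mem_cons]
    · have hφχ : φ = χ := fcode_inj _ _ h2
      subst hφχ
      simp only [List.mem_cons]; tauto
    · simp only [List.mem_cons, insertF_mem (L := L)]; tauto

theorem insertF_sorted {φ : Formula n} : ∀ {L : List (Formula n)},
    L.Pairwise flt → (insertF φ L).Pairwise flt
  | [], _ => by simp [insertF]
  | χ :: L, h => by
    obtain ⟨h1, h2⟩ := List.pairwise_cons.1 h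
    rw [insertF]
    split_ifs with hlt heq
    · refine List.pairwise_cons.2 ⟨?_, h⟩
      intro ψ hψ
      rcases List.mem_cons.1 hψ with rfl | hm
      · exact hlt
      · exact Nat.lt_trans hlt (h1 _ hm)
    · exact h
    · refine List.pairwise_cons.2 ⟨?_, insertF_sorted h2⟩
      intro ψ hψ
      rcases insertF_mem.1 hψ with rfl | hm
      · exact lt_of_le_of_ne (not_lt.1 hlt) (Ne.symm heq)
      · exact h1 _ hm

theorem normList_sorted (L : List (Formula n)) : (normList L).Pairwise flt := by
  induction L with
  | nil => simp [normList]
  | cons a L ih => exact insertF_sorted ih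

theorem normList_mem {ψ : Formula n} {L : List (Formula n)} :
    ψ ∈ normList L ↔ ψ ∈ L := by
  induction L with
  | nil => simp [normList]
  | cons a L ih =>
    show ψ ∈ insertF a (normList L) ↔ _
    rw [insertF_mem, ih]
    simp [List.mem_cons]

theorem sorted_eq : ∀ (L L' : List (Formula n)), L.Pairwise flt → L'.Pairwise flt →
    (∀ ψ, ψ ∈ L ↔ ψ ∈ L') → L = L'
  | [], [], _, _, _ => rfl
  | [], b :: L', _, _, h => absurd ((h b).2 (List.mem_cons_self)) (List.not_mem_nil)
  | a :: L, [], _, _, h => absurd ((h a).1 (List.mem_cons_self)) (List.not_mem_nil)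
  | a :: L, b :: L', hs, hs', h => by
    obtain ⟨h1, h2⟩ := List.pairwise_cons.1 hs
    obtain ⟨h1', h2'⟩ := List.pairwise_cons.1 hs'
    have hab : a = b := by
      rcases List.mem_cons.1 ((h a).1 (List.mem_cons_self)) with h' | h'
      · exact h'
      rcases List.mem_cons.1 ((h b).2 (List.mem_cons_self)) with h'' | h''
      · exact h''.symm
      · exact absurd (h1 _ h'') (Nat.lt_asymm (h1' _ h'))
    subst hab
    have htail : ∀ ψ, ψ ∈ L ↔ ψ ∈ L' := by
      intro ψ
      constructor
      · intro hm
        rcases List.mem_cons.1 ((h ψ).1 (List.mem_cons_of_mem _ hm)) with rfl | h'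
        · exact absurd (h1 _ hm) (Nat.lt_irrefl _)
        · exact h'
      · intro hm
        rcases List.mem_cons.1 ((h ψ).2 (List.mem_cons_of_mem _ hm)) with rfl | h'
        · exact absurd (h1' _ hm) (Nat.lt_irrefl _)
        · exact h'
    rw [sorted_eq L L' h2 h2' htail]

theorem normList_congr {L L' : List (Formula n)} (h : ∀ ψ, ψ ∈ L ↔ ψ ∈ L') :
    normList L = normList L' :=
  sorted_eq _ _ (normList_sorted L) (normList_sorted L') fun ψ => by
    rw [normList_mem, normList_mem]; exact h ψ

variable {W : Type} {M : KModel n W}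

theorem sat_bigAnd {s : W} {L : List (Formula n)} :
    Sat M s (bigAnd L) ↔ ∀ φ ∈ L, Sat M s φ := by
  induction L with
  | nil => simp [bigAnd, Sat]
  | cons a L ih => simp [bigAnd, Sat, ih]

theorem sat_bigOr {s : W} {L : List (Formula n)} :
    Sat M s (bigOr L) ↔ ∃ φ ∈ L, Sat M s φ := by
  induction L with
  | nil => simp [bigOr, Sat]
  | cons a L ih => simp [bigOr, Sat, ih]

theorem sat_minterm {s : W} {P S : Finset ℕ} :
    Sat M s (minterm (n := n) P S) ↔ ∀ q ∈ P, (q ∈ S ↔ q ∈ M.V s) := by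
  rw [minterm, sat_bigAnd]
  constructor
  · intro h q hq
    have hmem : (if q ∈ S then Formula.atom q else Formula.neg (Formula.atom q) : Formula n) ∈
        (P.sort (· ≤ ·)).map fun q =>
          if q ∈ S then Formula.atom q else Formula.neg (Formula.atom q) :=
      List.mem_map_of_mem ((Finset.mem_sort _).2 hq)
    have := h _ hmem
    by_cases hqS : q ∈ S
    · simp only [hqS, if_true, Sat] at this
      simp [hqS, this]
    · simp only [hqS, if_false, Sat] at this
      simp [hqS]
      intro hv
      exact absurd hv this
  · intro h φ hφ
    rw [List.mem_map] at hφ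
    obtain ⟨q, hq, rfl⟩ := hφ
    have hqP := (Finset.mem_sort _).1 hq
    by_cases hqS : q ∈ S
    · simp only [hqS, if_true, Sat]
      exact (h q hqP).1 hqS
    · simp only [hqS, if_false, Sat]
      intro hv
      exact hqS ((h q hqP).2 hv)

theorem sat_nabla {s : W} {B : {B : Finset (Fin n) // B.Nonempty}} {L : List (Formula n)} :
    Sat M s (nabla B L) ↔
      ((∀ t, M.RB B.1 s t → ∃ φ ∈ L, Sat M t φ) ∧ (∀ φ ∈ L, ∃ t, M.RB B.1 s t ∧ Sat M t φ)) := by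
  rw [nabla]
  show (Sat M s (Formula.D B (bigOr L)) ∧ _) ↔ _
  constructor
  · rintro ⟨hD, hneg⟩
    rw [sat_bigAnd] at hneg
    constructor
    · intro t ht
      exact sat_bigOr.1 (hD t ht)
    · intro φ hφ
      have hnot : ¬ Sat M s (Formula.D B (Formula.neg φ)) := hneg _ (List.mem_map_of_mem hφ)
      by_contra hcon
      push_neg at hcon
      exact hnot fun t ht hsat => hcon t ht hsat
  · rintro ⟨ha, hb⟩
    constructor
    · intro t ht
      exact sat_bigOr.2 (ha t ht)
    · rw [sat_bigAnd]
      intro ξ hξ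
      rw [List.mem_map] at hξ
      obtain ⟨φ, hφ, rfl⟩ := hξ
      obtain ⟨t, ht, hsat⟩ := hb φ hφ
      show ¬ Sat M s (Formula.D B (Formula.neg φ))
      intro hcon
      exact hcon t ht hsat

theorem sat_succ {s : W} {P : Finset ℕ} {m : ℕ} {d : CData n} :
    Sat M s (toFormula P (m + 1) d) ↔
      (Sat M s (minterm P (d.S ∩ P)) ∧
       ∀ B : {B : Finset (Fin n) // B.Nonempty}, B ∈ neSubsets n →
         ((∀ t, M.RB B.1 s t → ∃ cc ∈ d.succ B.1, Sat M t (toFormula P m cc)) ∧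
          (∀ cc ∈ d.succ B.1, ∃ t, M.RB B.1 s t ∧ Sat M t (toFormula P m cc)))) := by
  rw [toFormula]
  show (Sat M s _ ∧ Sat M s _) ↔ _
  rw [sat_bigAnd]
  constructor
  · rintro ⟨h0, h1⟩
    refine ⟨h0, fun B hB => ?_⟩
    have := h1 _ (List.mem_map_of_mem hB)
    rw [sat_nabla] at this
    obtain ⟨ha, hb⟩ := this
    constructor
    · intro t ht
      obtain ⟨φ, hφ, hsat⟩ := ha t ht
      rw [normList_mem, List.mem_map] at hφ
      obtain ⟨cc, hcc, rfl⟩ := hφ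
      exact ⟨cc, hcc, hsat⟩
    · intro cc hcc
      exact hb _ (normList_mem.2 (List.mem_map_of_mem hcc))
  · rintro ⟨h0, h1⟩
    refine ⟨h0, ?_⟩
    intro ξ hξ
    rw [List.mem_map] at hξ
    obtain ⟨B, hB, rfl⟩ := hξ
    rw [sat_nabla]
    obtain ⟨ha, hb⟩ := h1 B hB
    constructor
    · intro t ht
      obtain ⟨cc, hcc, hs⟩ := ha t ht
      exact ⟨_, normList_mem.2 (List.mem_map_of_mem hcc), hs⟩
    · intro φ hφ
      rw [normList_mem, List.mem_map] at hφ
      obtain ⟨cc, hcc, rfl⟩ := hφ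
      exact hb cc hcc

theorem minterm_inter_eq {s : W} {P : Finset ℕ} {S S' : Finset ℕ}
    (h : Sat M s (minterm (n := n) P (S ∩ P))) (h' : Sat M s (minterm (n := n) P (S' ∩ P))) :
    S ∩ P = S' ∩ P := by
  rw [sat_minterm] at h h'
  ext q
  simp only [Finset.mem_inter]
  constructor
  · rintro ⟨h1, h2⟩
    have := (h' q h2).2 ((h q h2).1 (Finset.mem_inter.2 ⟨h1, h2⟩))
    exact ⟨(Finset.mem_inter.1 this).1, h2⟩
  · rintro ⟨h1, h2⟩
    have := (h q h2).2 ((h' q h2).1 (Finset.mem_inter.2 ⟨h1, h2⟩))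
    exact ⟨(Finset.mem_inter.1 this).1, h2⟩

theorem cf_unique {P : Finset ℕ} : ∀ (m : ℕ) {W : Type} (M : KModel n W) (s : W)
    (d d' : CData n), Sat M s (toFormula P m d) → Sat M s (toFormula P m d') →
    toFormula P m d = toFormula P m d' := by
  intro m
  induction m with
  | zero =>
    intro W M s d d' h h'
    rw [toFormula] at h h' ⊢
    rw [show toFormula P 0 d' = minterm P (d'.S ∩ P) from rfl]
    rw [minterm_inter_eq h h']
  | succ m ih =>
    intro W M s d d' h h'
    rw [sat_succ] at h h'
    obtain ⟨h0, h1⟩ := h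
    obtain ⟨h0', h1'⟩ := h'
    rw [toFormula, toFormula]
    rw [minterm_inter_eq h0 h0']
    congr 1
    congr 1
    apply List.map_congr_left
    intro B hB
    congr 1
    apply normList_congr
    intro ψ
    simp only [List.mem_map]
    obtain ⟨ha, hb⟩ := h1 B hB
    obtain ⟨ha', hb'⟩ := h1' B hB
    constructor
    · rintro ⟨cc, hcc, rfl⟩
      obtain ⟨t, ht, hst⟩ := hb cc hcc
      obtain ⟨cc', hcc', hst'⟩ := ha' t ht
      exact ⟨cc', hcc', (ih M t cc' cc hst' hst)⟩
    · rintro ⟨cc', hcc', rfl⟩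
      obtain ⟨t, ht, hst'⟩ := hb' cc' hcc'
      obtain ⟨cc, hcc, hst⟩ := ha t ht
      exact ⟨cc, hcc, (ih M t cc cc' hst hst')⟩

theorem down_sat {P : Finset ℕ} : ∀ (m : ℕ) {W : Type} (M : KModel n W) (s : W) (d : CData n),
    Sat M s (toFormula P m d) → Sat M s (toFormula P (m - 1) (downD m d)) := by
  intro m
  induction m with
  | zero =>
    intro W M s d h
    simpa [downD] using h
  | succ m ih =>
    intro W M s d h
    cases m with
    | zero =>
      rw [sat_succ] at h
      have h0 := h.1
      show Sat M s (toFormula P 0 (downD 1 d))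
      rw [toFormula]
      simpa [downD, CData.S] using h0
    | succ m =>
      show Sat M s (toFormula P (m + 1) (downD (m + 2) d))
      rw [sat_succ] at h
      obtain ⟨h0, h1⟩ := h
      rw [sat_succ]
      constructor
      · simpa [downD, CData.S] using h0
      · intro B hB
        obtain ⟨ha, hb⟩ := h1 B hB
        constructor
        · intro t ht
          obtain ⟨cc, hcc, hs⟩ := ha t ht
          refine ⟨downD (m + 1) cc, ?_, ?_⟩
          · show downD (m + 1) cc ∈ (downD (m + 2) d).succ B.1
            rw [downD]
            show downD (m + 1) cc ∈ (d.succ B.1).map fun c => downD (m + 1) c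
            exact List.mem_map_of_mem hcc
          · have := ih M t cc hs
            simpa using this
        · intro cc' hcc'
          rw [show (downD (m + 2) d).succ B.1 = (d.succ B.1).map (fun c => downD (m + 1) c)
              from rfl, List.mem_map] at hcc'
          obtain ⟨cc, hcc, rfl⟩ := hcc'
          obtain ⟨t, ht, hs⟩ := hb cc hcc
          exact ⟨t, ht, by simpa using ih M t cc hs⟩

theorem downIter_sat {P : Finset ℕ} : ∀ (l m : ℕ) {W : Type} (M : KModel n W) (s : W)
    (d : CData n), Sat M s (toFormula P m d) →
    Sat M s (toFormula P (m - l) (downIter m l d)) := by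
  intro l
  induction l with
  | zero =>
    intro m W M s d h
    simpa [downIter] using h
  | succ l ih =>
    intro m W M s d h
    have h1 := down_sat m M s d h
    have h2 := ih (m - 1) M s _ h1
    have he : m - (l + 1) = m - 1 - l := by omega
    rw [downIter, he]
    exact h2

theorem sum_range_two_pow_lt (k : ℕ) : ∑ j ∈ Finset.range k, 2 ^ j < 2 ^ k := by
  induction k with
  | zero => simp
  | succ k ih =>
    rw [Finset.sum_range_succ, pow_succ]
    omega

theorem mem_neSubsets {B : Finset (Fin n)} (hB : B.Nonempty) :
    (⟨B, hB⟩ : {B : Finset (Fin n) // B.Nonempty}) ∈ neSubsets n := by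
  rw [neSubsets, List.mem_filterMap]
  refine ⟨B, ?_, by simp [hB]⟩
  rw [List.mem_map]
  refine ⟨B.sum fun i => 2 ^ (i : ℕ), ?_, ?_⟩
  · rw [List.mem_range, finSum_eq_image]
    calc ∑ j ∈ B.image (Fin.val), 2 ^ j ≤ ∑ j ∈ Finset.range n, 2 ^ j := by
          apply Finset.sum_le_sum_of_subset
          intro j hj
          rw [Finset.mem_image] at hj
          obtain ⟨i, _, rfl⟩ := hj
          exact Finset.mem_range.2 i.isLt
      _ < 2 ^ n := sum_range_two_pow_lt n
  · ext i
    rw [natToFinset, Finset.mem_filter]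
    simp only [Finset.mem_univ, true_and]
    rw [testBit_iff_mem_bitIndices]
    rw [finSum_eq_image]
    have hfin : (∑ j ∈ B.image (Fin.val), 2 ^ j).bitIndices.toFinset = B.image (Fin.val) := by
      simp
    constructor
    · intro hmem
      have : (i : ℕ) ∈ B.image (Fin.val) := by
        rw [← hfin]
        exact List.mem_toFinset.2 hmem
      rw [Finset.mem_image] at this
      obtain ⟨i', hi', hval⟩ := this
      rwa [← Fin.val_injective hval]
    · intro hmem
      have : (i : ℕ) ∈ B.image (Fin.val) := Finset.mem_image_of_mem _ hmem
      rw [← hfin] at this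
      exact List.mem_toFinset.1 this

theorem RB_eucl (hM : IsModel MSys.K45 M) (B : Finset (Fin n)) {x y z : W}
    (hxy : M.RB B x y) (hxz : M.RB B x z) : M.RB B y z :=
  fun i hi => (hM i).2 _ _ _ (hxy i hi) (hxz i hi)

theorem RB_trans (hM : IsModel MSys.K45 M) (B : Finset (Fin n)) {x y z : W}
    (hxy : M.RB B x y) (hyz : M.RB B y z) : M.RB B x z :=
  fun i hi => (hM i).1 (hxy i hi) (hyz i hi)

end Aux

/-- the identical successors property for `K45_n D`-satisfiable canonical
formulas: `R_B(δ)^{↓l} = R_B(η)^{↓(l−1)}` for every `η ∈ R_B(δ)`. -/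
theorem identical_successors {n : ℕ} (P : Finset ℕ) (k : ℕ) (hk : 2 ≤ k)
    (d : CData n) (hsat : SatL MSys.K45 (cf P k d))
    (l : ℕ) (hl1 : 1 ≤ l) (hlk : l < k)
    (B : Finset (Fin n)) (hB : B.Nonempty)
    (c : CData n) (hc : c ∈ d.succ B) :
    {φ : Formula n | ∃ c' ∈ d.succ B, φ = cfDown P (k - 1) l c'} =
    {φ : Formula n | ∃ c'' ∈ c.succ B, φ = cfDown P (k - 2) (l - 1) c''} := by
  obtain ⟨m, rfl⟩ : ∃ m, k = m + 2 := ⟨k - 2, by omega⟩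
  obtain ⟨W, M, s, hM, hs⟩ := hsat
  have hs' : Sat M s (toFormula P (m + 1 + 1) d) := hs
  rw [sat_succ] at hs'
  obtain ⟨-, h1⟩ := hs'
  obtain ⟨ha, hb⟩ := h1 ⟨B, hB⟩ (mem_neSubsets hB)
  obtain ⟨t, ht, hsatc⟩ := hb c hc
  rw [sat_succ] at hsatc
  obtain ⟨-, h1c⟩ := hsatc
  obtain ⟨hac, hbc⟩ := h1c ⟨B, hB⟩ (mem_neSubsets hB)
  have e1 : m + 2 - 1 = m + 1 := by omega
  have e2 : m + 2 - 2 = m := by omega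
  ext φ
  simp only [Set.mem_setOf_eq]
  constructor
  · rintro ⟨c', hc', rfl⟩
    obtain ⟨t', ht', hsat'⟩ := hb c' hc'
    have htt' : M.RB B t t' := RB_eucl hM B ht ht'
    obtain ⟨c'', hc'', hsat''⟩ := hac t' htt'
    refine ⟨c'', hc'', ?_⟩
    have e3 : m - (l - 1) = m + 1 - l := by omega
    rw [cfDown, cfDown, e1, e2, e3]
    have hA := downIter_sat l (m + 1) M t' c' hsat'
    have hB2 := downIter_sat (l - 1) m M t' c'' hsat''
    rw [e3] at hB2
    exact cf_unique (m + 1 - l) M t' _ _ hA hB2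
  · rintro ⟨c'', hc'', rfl⟩
    obtain ⟨t'', htt'', hsat''⟩ := hbc c'' hc''
    have hst'' : M.RB B s t'' := RB_trans hM B ht htt''
    obtain ⟨c', hc', hsat'⟩ := ha t'' hst''
    refine ⟨c', hc', ?_⟩
    have e3 : m - (l - 1) = m + 1 - l := by omega
    rw [cfDown, cfDown, e1, e2, e3]
    have hA := downIter_sat l (m + 1) M t'' c' hsat'
    have hB2 := downIter_sat (l - 1) m M t'' c'' hsat''
    rw [e3] at hB2
    exact (cf_unique (m + 1 - l) M t'' _ _ hA hB2).symm


end DKLogic
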